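/- arXiv:1902.01975 — 8 statements merged into one kernel-verified Lean document; each statement's English description precedes it below -/
import Mathlib

section
/- The solution of the linear system (nλ+nμ)v₀ = 1 + nλv₀ + μ∑_{j=1}^n v_j, together with v₁ = 1/(nλ) and the recursion ((n-i+1)λ + (i-1)μ)v_i = 1 + μ∑_{j=1}^{i-1} v_j + λ(n-i+1)v_{i-1} for 2 ≤ i ≤ n, satisfies v₀ = (1/μ)[ (1/(nρ))∑_{j=1}^{n-1} ∏_{i=1}^{j} (ρ(n-i+1))/(i + (n-i)ρ) + 1/(nρ) + (1/n²)∏_{i=1}^{n-1} (ρ(n-i+1))/(i + (n-i)ρ) ], where ρ = λ/μ. -/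
open Finset

theorem aoi_single_source_n_servers
    (n : ℕ) (hn : 1 ≤ n) (lam mu : ℝ) (hlam : 0 < lam) (hmu : 0 < mu)
    (rho : ℝ) (hrho : rho = lam / mu)
    (v : ℕ → ℝ)
    (h0 : (n * lam + n * mu) * v 0 = 1 + n * lam * v 0 + mu * ∑ j ∈ Icc 1 n, v j)
    (h1 : v 1 = 1 / (n * lam))
    (hrec : ∀ i : ℕ, 2 ≤ i → i ≤ n →
      (((n : ℝ) - i + 1) * lam + ((i : ℝ) - 1) * mu) * v i =
        1 + mu * ∑ j ∈ Icc 1 (i - 1), v j + lam * ((n : ℝ) - i + 1) * v (i - 1)) :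
    v 0 = (1 / mu) *
      ((1 / (n * rho)) * ∑ j ∈ Icc 1 (n - 1), ∏ i ∈ Icc 1 j,
          (rho * ((n : ℝ) - i + 1)) / ((i : ℝ) + ((n : ℝ) - i) * rho)
        + 1 / (n * rho)
        + (1 / (n : ℝ) ^ 2) * ∏ i ∈ Icc 1 (n - 1),
          (rho * ((n : ℝ) - i + 1)) / ((i : ℝ) + ((n : ℝ) - i) * rho)) := by
  have hmu' : mu ≠ 0 := ne_of_gt hmu
  have hlam' : lam ≠ 0 := ne_of_gt hlam
  have hn0 : (0:ℝ) < (n:ℝ) := by exact_mod_cast hn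
  have hn0' : (n:ℝ) ≠ 0 := ne_of_gt hn0
  have hrho0 : 0 < rho := by rw [hrho]; positivity
  set W : ℕ → ℝ := fun j => ∏ i ∈ Icc 1 j,
      (rho * ((n : ℝ) - i + 1)) / ((i : ℝ) + ((n : ℝ) - i) * rho) with hWdef
  have hW0 : W 0 = 1 := by simp [hWdef]
  have hlm : lam = rho * mu := by rw [hrho]; field_simp
  -- ratio lemma
  have Wstep : ∀ k : ℕ, k + 1 ≤ n →
      ((k:ℝ)+1) * mu * W (k+1) + ((n:ℝ)-((k:ℝ)+1)) * lam * W (k+1)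
        = lam * ((n:ℝ)-(k:ℝ)) * W k := by
    intro k hk
    have hkn : ((k:ℝ)+1) ≤ (n:ℝ) := by exact_mod_cast hk
    have hden : (0:ℝ) < ((k:ℝ)+1) + ((n:ℝ)-((k:ℝ)+1)) * rho := by
      have h2 : (0:ℝ) ≤ ((n:ℝ)-((k:ℝ)+1)) * rho :=
        mul_nonneg (by linarith) (le_of_lt hrho0)
      linarith
    have e : W (k+1) = W k *
        ((rho * ((n : ℝ) - (↑(k+1):ℝ) + 1)) / ((↑(k+1):ℝ) + ((n : ℝ) - (↑(k+1):ℝ)) * rho)) :=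
      Finset.prod_Icc_succ_top (Nat.le_add_left 1 k) _
    push_cast at e
    rw [e, hlm]
    linear_combination (W k * rho * mu * ((n:ℝ) - k)) * mul_inv_cancel₀ (ne_of_gt hden)
  -- main simultaneous induction
  have key : ∀ k : ℕ, k + 1 ≤ n →
      ((n:ℝ) * lam * v (k+1) = 1 + ∑ j ∈ Icc 1 k, W j) ∧
      ((n:ℝ) * (mu * ∑ j ∈ Icc 1 (k+1), v j)
        = (n:ℝ) * (((k:ℝ)+1) * mu * v (k+1)) + ((n:ℝ) - (k:ℝ)) * W k - (n:ℝ)) := by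
    intro k
    induction k with
    | zero =>
      intro _
      constructor
      · rw [h1]; simp; field_simp
      · simp [hW0]
    | succ k ih =>
      intro hk2
      obtain ⟨hA, hB⟩ := ih (by omega)
      have hs := Wstep k (by omega)
      have hr := hrec (k+1+1) (by omega) hk2
      have hidx : k + 1 + 1 - 1 = k + 1 := by omega
      rw [hidx] at hr
      push_cast at hr
      have hkn : ((k:ℝ)+2) ≤ (n:ℝ) := by exact_mod_cast hk2
      have hD : (0:ℝ) < ((n:ℝ)-((k:ℝ)+1)) * lam + ((k:ℝ)+1) * mu := by
        have : (0:ℝ) < ((n:ℝ)-((k:ℝ)+1)) * lam := mul_pos (by linarith) hlam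
        nlinarith
      have hA1 : (n:ℝ) * lam * v (k+1+1) = (n:ℝ) * lam * v (k+1) + W (k+1) := by
        have hG1 : (((n:ℝ)-((k:ℝ)+1)) * lam + ((k:ℝ)+1) * mu) * ((n:ℝ) * lam * v (k+1+1))
            = (((n:ℝ)-((k:ℝ)+1)) * lam + ((k:ℝ)+1) * mu) * ((n:ℝ) * lam * v (k+1) + W (k+1)) := by
          linear_combination ((n:ℝ)*lam) * hr + lam * hB - hs
        exact mul_left_cancel₀ (ne_of_gt hD) hG1
      constructor
      · rw [Finset.sum_Icc_succ_top (by omega : 1 ≤ k+1)]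
        push_cast
        linarith [hA, hA1]
      · rw [Finset.sum_Icc_succ_top (by omega : 1 ≤ k+1+1)]
        push_cast
        apply mul_left_cancel₀ hlam'
        linear_combination lam * hB - ((k:ℝ)+1) * mu * hA1 - hs
  -- final assembly
  obtain ⟨hA, hB⟩ := key (n-1) (by omega)
  have hn1 : n - 1 + 1 = n := by omega
  rw [hn1] at hA hB
  have hc : ((n-1 : ℕ) : ℝ) = (n:ℝ) - 1 := by
    have := Nat.cast_sub hn (R := ℝ); simpa using this
  rw [hc] at hB
  have h0' : (n:ℝ) * mu * v 0 = 1 + mu * ∑ j ∈ Icc 1 n, v j := by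
    linear_combination h0
  have hvn : v n = (1/((n:ℝ)*lam)) * (1 + ∑ j ∈ Icc 1 (n-1), W j) := by
    field_simp
    linarith [hA]
  have hv0 : v 0 = v n + (1/((n:ℝ)^2*mu)) * W (n-1) := by
    have hNN : (0:ℝ) < (n:ℝ)^2 * mu := by positivity
    field_simp
    nlinarith [h0', hB]
  have hWn1 : (∏ i ∈ Icc 1 (n-1),
      (rho * ((n : ℝ) - i + 1)) / ((i : ℝ) + ((n : ℝ) - i) * rho)) = W (n-1) := rfl
  rw [hv0, hvn, hWn1, hrho]
  field_simp
  ring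
end

section
/- For the differences w_{i+1} := v_{i+1} − v_i of the solution of the recursion ((n-i+1)λ + (i-1)μ)v_i = 1 + μ∑_{j=1}^{i-1} v_j + λ(n-i+1)v_{i-1} (with v₁ = 1/(nλ)), one has for all 2 ≤ i ≤ n−1 the relation (iμ + (n-i)λ)(v_{i+1} − v_i) = λ(n-i+1)(v_i − v_{i-1}), and consequently w_j = (1/(nλ)) ∏_{i=1}^{j-1} (λ(n-i+1))/(iμ + (n-i)λ) for all 2 ≤ j ≤ n. -/
open Finset

theorem aoi_differences_w
    (n : ℕ) (hn : 2 ≤ n) (lam mu : ℝ) (hlam : 0 < lam) (hmu : 0 < mu)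
    (v : ℕ → ℝ)
    (h1 : v 1 = 1 / (n * lam))
    (hrec : ∀ i : ℕ, 2 ≤ i → i ≤ n →
      (((n : ℝ) - i + 1) * lam + ((i : ℝ) - 1) * mu) * v i =
        1 + mu * ∑ j ∈ Icc 1 (i - 1), v j + lam * ((n : ℝ) - i + 1) * v (i - 1)) :
    (∀ i : ℕ, 2 ≤ i → i ≤ n - 1 →
      ((i : ℝ) * mu + ((n : ℝ) - i) * lam) * (v (i + 1) - v i) =
        lam * ((n : ℝ) - i + 1) * (v i - v (i - 1))) ∧
    (∀ j : ℕ, 2 ≤ j → j ≤ n →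
      v j - v (j - 1) = (1 / (n * lam)) * ∏ i ∈ Icc 1 (j - 1),
        (lam * ((n : ℝ) - i + 1)) / ((i : ℝ) * mu + ((n : ℝ) - i) * lam)) := by
  have hncast : (2:ℝ) ≤ (n:ℝ) := by exact_mod_cast hn
  have part1 : ∀ i : ℕ, 2 ≤ i → i ≤ n - 1 →
      ((i : ℝ) * mu + ((n : ℝ) - i) * lam) * (v (i + 1) - v i) =
        lam * ((n : ℝ) - i + 1) * (v i - v (i - 1)) := by
    intro i h2 hle
    have hin : i + 1 ≤ n := by omega
    have hA := hrec i h2 (by omega)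
    have hB := hrec (i + 1) (by omega) hin
    have hi1 : i - 1 + 1 = i := by omega
    have hsum : ∑ j ∈ Icc 1 (i + 1 - 1), v j = ∑ j ∈ Icc 1 (i - 1), v j + v i := by
      have h' : i + 1 - 1 = (i - 1) + 1 := by omega
      rw [h', Finset.sum_Icc_succ_top (by omega), hi1]
    rw [hsum] at hB
    simp only [Nat.add_sub_cancel] at hB
    push_cast at hB
    linear_combination hB - hA
  refine ⟨part1, ?_⟩
  intro j h2
  induction j, h2 using Nat.le_induction with
  | base =>
    intro hjn
    have h := hrec 2 le_rfl hn
    norm_num at h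
    have hD : ((n:ℝ) - 2 + 1) * lam + mu ≠ 0 := by nlinarith
    have hD2 : (1:ℝ) * mu + ((n:ℝ) - 1) * lam ≠ 0 := by nlinarith
    have hnl : (n:ℝ) * lam ≠ 0 := by nlinarith
    rw [show (2:ℕ) - 1 = 1 from rfl] at *
    simp only [Finset.Icc_self, Finset.prod_singleton, Nat.cast_one]
    have key : v 2 - v 1 = 1 / (((n:ℝ) - 2 + 1) * lam + mu) := by
      rw [eq_div_iff hD]
      linear_combination h
    rw [key]
    have hE : lam * (n:ℝ) * mu - lam ^ 2 * (n:ℝ) + lam ^ 2 * (n:ℝ) ^ 2 ≠ 0 := by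
      have h3 : lam * (n:ℝ) * mu - lam ^ 2 * (n:ℝ) + lam ^ 2 * (n:ℝ) ^ 2
          = lam * (n:ℝ) * (mu + lam * ((n:ℝ) - 1)) := by ring
      rw [h3]
      apply ne_of_gt
      apply mul_pos (by nlinarith) (by nlinarith)
    field_simp
    have hden : (n:ℝ) * lam * (mu + ((n:ℝ) - 1) * lam) ≠ 0 := by
      apply mul_ne_zero hnl
      nlinarith
    rw [eq_div_iff (ne_of_gt (by nlinarith))]
    ring
  | succ j hj ih =>
    intro hjn
    have hjn' : j ≤ n := by omega
    have hrel := part1 j hj (by omega)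
    have hih := ih hjn'
    have hi1 : j - 1 + 1 = j := by omega
    have hprod : ∏ i ∈ Icc 1 j,
        (lam * ((n : ℝ) - i + 1)) / ((i : ℝ) * mu + ((n : ℝ) - i) * lam)
        = (∏ i ∈ Icc 1 (j - 1),
        (lam * ((n : ℝ) - i + 1)) / ((i : ℝ) * mu + ((n : ℝ) - i) * lam))
          * ((lam * ((n : ℝ) - j + 1)) / ((j : ℝ) * mu + ((n : ℝ) - j) * lam)) := by
      conv_lhs => rw [← hi1]
      rw [Finset.prod_Icc_succ_top (by omega), hi1]
    have hjc : (2:ℝ) ≤ (j:ℝ) := by exact_mod_cast hj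
    have hjnc : (j:ℝ) + 1 ≤ (n:ℝ) := by exact_mod_cast hjn
    have hD : (j:ℝ) * mu + ((n:ℝ) - j) * lam > 0 := by nlinarith
    simp only [Nat.add_sub_cancel]
    rw [hprod, ← mul_assoc, ← hih]
    have hD' : (j:ℝ) * mu + ((n:ℝ) - j) * lam ≠ 0 := ne_of_gt hD
    rw [← mul_div_assoc, eq_div_iff hD']
    linear_combination hrel
end

section
/- The unique solution (v₀, v₁, v₂) of the system: 2μv₀ = 1 + μ(v₁+v₂); (λ + λ₁)v₁ = 1 + (λ−λ₁)v₂; (2λ − λ₁ + μ)v₂ = 1 + (λ₁+μ)v₁ + 2(λ−λ₁)v₀, satisfies v₀ = 1/(2(λ+μ)) + (λ+μ)/(2μλ₁). -/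
theorem aoi_two_servers_multiple_sources
    (lam mu lam1 : ℝ) (hmu : 0 < mu) (hlam : 0 < lam)
    (hlam1 : 0 < lam1) (hle : lam1 ≤ lam)
    (v0 v1 v2 : ℝ)
    (h0 : 2 * mu * v0 = 1 + mu * (v1 + v2))
    (h1 : (lam + lam1) * v1 = 1 + (lam - lam1) * v2)
    (h2 : (2 * lam - lam1 + mu) * v2 = 1 + (lam1 + mu) * v1 + 2 * (lam - lam1) * v0) :
    v0 = 1 / (2 * (lam + mu)) + (lam + mu) / (2 * mu * lam1) := by
  have hlm : lam + mu ≠ 0 := by positivity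
  have hm : mu ≠ 0 := hmu.ne'
  have hl1 : lam1 ≠ 0 := hlam1.ne'
  field_simp
  linear_combination (lam^2 + mu*lam1) * h0 + mu*(lam+mu) * h1 + mu*lam * h2
end

section
/- The solution of the SHS linear system for a single source and two heterogeneous servers satisfies v₁₀ + v₂₀ = 1/(μ₁+μ₂) + 1/(λ₁+λ₂) + (1/((μ₁+μ₂)(λ₁+λ₂)))·( μ₁λ₂/(λ₁+μ₂) + μ₂λ₁/(λ₂+μ₁) ). -/
theorem aoi_two_heterogeneous_servers
    (lam1 lam2 mu1 mu2 : ℝ)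
    (hlam1 : 0 < lam1) (hlam2 : 0 < lam2) (hmu1 : 0 < mu1) (hmu2 : 0 < mu2)
    (pi1 pi2 v11 v22 v12 v21 v10 v20 : ℝ)
    (hpi1 : pi1 = lam1 / (lam1 + lam2))
    (hpi2 : pi2 = lam2 / (lam1 + lam2))
    (hv11 : v11 = pi1 / (lam1 + lam2))
    (hv22 : v22 = pi2 / (lam1 + lam2))
    (hv12 : v12 = pi1 * (1 / (lam1 + lam2) + 1 / (lam2 + mu1)))
    (hv21 : v21 = pi2 * (1 / (lam1 + lam2) + 1 / (lam1 + mu2)))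
    (h10 : (lam1 + lam2 + mu1 + mu2) * v10 =
        pi1 + lam1 * v10 + lam1 * v20 + mu1 * v11 + mu2 * v12)
    (h20 : (lam1 + lam2 + mu1 + mu2) * v20 =
        pi2 + lam2 * v10 + lam2 * v20 + mu1 * v21 + mu2 * v22) :
    v10 + v20 = 1 / (mu1 + mu2) + 1 / (lam1 + lam2) +
      (1 / ((mu1 + mu2) * (lam1 + lam2))) *
        (mu1 * lam2 / (lam1 + mu2) + mu2 * lam1 / (lam2 + mu1)) := by
  have hs : (mu1 + mu2) * (v10 + v20) =
      pi1 + pi2 + mu1 * (v11 + v21) + mu2 * (v12 + v22) := by linarith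
  subst hpi1 hpi2 hv11 hv22 hv12 hv21
  have h1 : lam1 + lam2 ≠ 0 := by positivity
  have h2 : lam2 + mu1 ≠ 0 := by positivity
  have h3 : lam1 + mu2 ≠ 0 := by positivity
  have h4 : mu1 + mu2 ≠ 0 := by positivity
  have key : v10 + v20 =
      (lam1 / (lam1 + lam2) + lam2 / (lam1 + lam2) +
        mu1 * (lam1 / (lam1 + lam2) / (lam1 + lam2) +
          lam2 / (lam1 + lam2) * (1 / (lam1 + lam2) + 1 / (lam1 + mu2))) +
        mu2 * (lam1 / (lam1 + lam2) * (1 / (lam1 + lam2) + 1 / (lam2 + mu1)) +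
          lam2 / (lam1 + lam2) / (lam1 + lam2))) / (mu1 + mu2) :=
    eq_div_of_mul_eq h4 (by linarith [hs])
  rw [key]
  field_simp
  ring
end

section
/- In the heterogeneous two-server AoI formula Δ(λ₁) = 1/(μ₁+μ₂) + 1/λ + (1/((μ₁+μ₂)λ))·( μ₁(λ−λ₁)/(λ₁+μ₂) + μ₂λ₁/(λ−λ₁+μ₁) ) with total rate λ₁ + λ₂ = λ fixed, if μ₁ = μ₂ then λ₁ = λ/2 minimizes Δ over λ₁ ∈ [0, λ]. -/
theorem equal_service_rates_half_split_optimal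
    (lam mu : ℝ) (hlam : 0 < lam) (hmu : 0 < mu)
    (Delta : ℝ → ℝ)
    (hDelta : Delta = fun l1 =>
      1 / (mu + mu) + 1 / lam + (1 / ((mu + mu) * lam)) *
        (mu * (lam - l1) / (l1 + mu) + mu * l1 / (lam - l1 + mu))) :
    ∀ l1 ∈ Set.Icc (0 : ℝ) lam, Delta (lam / 2) ≤ Delta l1 := by
  rintro l1 ⟨h0, h1⟩
  subst hDelta
  simp only
  have d1 : 0 < l1 + mu := by linarith
  have d2 : 0 < lam - l1 + mu := by linarith
  have d0 : 0 < lam / 2 + mu := by linarith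
  have key : mu * (lam - lam / 2) / (lam / 2 + mu) + mu * (lam / 2) / (lam - lam / 2 + mu)
      ≤ mu * (lam - l1) / (l1 + mu) + mu * l1 / (lam - l1 + mu) := by
    have h : lam - lam / 2 + mu = lam / 2 + mu := by ring
    rw [h, div_add_div _ _ (ne_of_gt d0) (ne_of_gt d0),
        div_add_div _ _ (ne_of_gt d1) (ne_of_gt d2),
        div_le_div_iff₀ (by positivity) (by positivity)]
    nlinarith [sq_nonneg (2 * l1 - lam), mul_pos hmu hlam, mul_pos d1 d2,
      mul_nonneg (mul_nonneg hmu.le (sq_nonneg (2 * l1 - lam))) hmu.le,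
      mul_nonneg (mul_nonneg hlam.le (sq_nonneg (2 * l1 - lam))) hmu.le]
  have hpos : 0 < 1 / ((mu + mu) * lam) := by positivity
  nlinarith [mul_le_mul_of_nonneg_left key hpos.le]
end

section
/- If μ₁ < μ₂ and μ₂² − μ₁(λ+μ₁)(λ+μ₂)/μ₂ < 0, then the quadratic λ₁²(1−c) + 2λ₁(μ₂ + c(λ+μ₁)) + μ₂² − c(λ+μ₁)² = 0, with c = μ₁(λ+μ₂)/(μ₂(λ+μ₁)), has exactly one positive real root, given by λ₁* = [ −(μ₂ + c(λ+μ₁)) + √( μ₁(λ+μ₂)(2 + μ₂/(λ+μ₁) + (λ+μ₁)/μ₂) ) ] / (1 − μ₁(λ+μ₂)/(μ₂(λ+μ₁))). -/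
theorem unique_positive_root_case
    (lam mu1 mu2 : ℝ) (hlam : 0 < lam) (hmu1 : 0 < mu1) (hmu2 : 0 < mu2)
    (hmu : mu1 < mu2)
    (c : ℝ) (hc : c = mu1 * (lam + mu2) / (mu2 * (lam + mu1)))
    (hcond : mu2 ^ 2 - mu1 * (lam + mu1) * (lam + mu2) / mu2 < 0)
    (q : ℝ → ℝ)
    (hq : q = fun x => x ^ 2 * (1 - c) + 2 * x * (mu2 + c * (lam + mu1))
        + mu2 ^ 2 - c * (lam + mu1) ^ 2)
    (lamstar : ℝ)
    (hstar : lamstar =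
      (-(mu2 + c * (lam + mu1)) +
        Real.sqrt (mu1 * (lam + mu2) *
          (2 + mu2 / (lam + mu1) + (lam + mu1) / mu2))) /
      (1 - mu1 * (lam + mu2) / (mu2 * (lam + mu1)))) :
    q lamstar = 0 ∧ 0 < lamstar ∧ ∀ r : ℝ, q r = 0 → 0 < r → r = lamstar := by
  have hA : 0 < lam + mu1 := by linarith
  have hB : 0 < mu2 := hmu2
  have hA2 : 0 < lam + mu2 := by linarith
  have hden : 0 < mu2 * (lam + mu1) := by positivity
  have hcpos : 0 < c := by rw [hc]; positivity
  have hclt : c < 1 := by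
    rw [hc, div_lt_one hden]; nlinarith
  have h1c : 0 < 1 - c := by linarith
  -- key inequality: c*(lam+mu1)^2 > mu2^2
  have hkey : mu2 ^ 2 < c * (lam + mu1) ^ 2 := by
    have : c * (lam + mu1) ^ 2 = mu1 * (lam + mu1) * (lam + mu2) / mu2 := by
      rw [hc]; field_simp
    rw [this]; linarith
  set D := mu1 * (lam + mu2) * (2 + mu2 / (lam + mu1) + (lam + mu1) / mu2) with hDdef
  have hD : D = c * (lam + mu1 + mu2) ^ 2 := by
    rw [hDdef, hc]; field_simp; ring
  set s := Real.sqrt D with hsdef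
  have hDpos : 0 ≤ D := by rw [hD]; positivity
  have hs0 : 0 ≤ s := Real.sqrt_nonneg _
  have hs2 : s ^ 2 = c * (lam + mu1 + mu2) ^ 2 := by
    rw [hsdef, Real.sq_sqrt hDpos, hD]
  have htpos : 0 < mu2 + c * (lam + mu1) := by positivity
  -- s > mu2 + c*(lam+mu1)
  have hsgt : mu2 + c * (lam + mu1) < s := by
    nlinarith [hs2, hkey, sq_nonneg (s - (mu2 + c * (lam + mu1))), sq_nonneg (s + (mu2 + c * (lam + mu1)))]
  have hstar' : lamstar = (-(mu2 + c * (lam + mu1)) + s) / (1 - c) := by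
    rw [hstar, hsdef, hDdef, hc]
  have hx : lamstar * (1 - c) = s - (mu2 + c * (lam + mu1)) := by
    rw [hstar']; field_simp; ring
  have hpos : 0 < lamstar := by
    rw [hstar']
    apply div_pos (by linarith) h1c
  have hq0 : q lamstar = 0 := by
    have hmain : (1 - c) * q lamstar = 0 := by
      rw [hq]
      simp only
      linear_combination (lamstar * (1 - c) + s + (mu2 + c * (lam + mu1))) * hx + hs2
    have := mul_eq_zero.mp hmain
    rcases this with h | h
    · linarith
    · exact h
  refine ⟨hq0, hpos, ?_⟩
  intro r hr hrpos
  have hfac : (r - lamstar) * ((r + lamstar) * (1 - c) + 2 * (mu2 + c * (lam + mu1))) = 0 := by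
    rw [hq] at hr hq0
    simp only at hr hq0
    linear_combination hr - hq0
  have hfac2 : (r + lamstar) * (1 - c) + 2 * (mu2 + c * (lam + mu1)) > 0 := by
    have : 0 < r + lamstar := by linarith
    nlinarith
  rcases mul_eq_zero.mp hfac with h | h
  · linarith
  · linarith
end

section
/- The stationary distribution of the 6-state Markov chain on orderings of 3 heterogeneous servers, determined by π₁(λ₂+λ₃) = λ₁(π₃+π₄), π₂(λ₂+λ₃) = λ₁(π₅+π₆), π₃(λ₁+λ₃) = λ₂(π₁+π₂), π₄(λ₁+λ₃) = λ₂(π₅+π₆), π₅(λ₁+λ₂) = λ₃(π₁+π₂), π₆(λ₁+λ₂) = λ₃(π₃+π₄), together with ∑πᵢ = 1, is given by π₁ = λ₁λ₂/((λ₂+λ₃)Λ), π₂ = λ₁λ₃/((λ₂+λ₃)Λ), π₃ = λ₂λ₁/((λ₁+λ₃)Λ), π₄ = λ₂λ₃/((λ₁+λ₃)Λ), π₅ = λ₃λ₁/((λ₁+λ₂)Λ), π₆ = λ₃λ₂/((λ₁+λ₂)Λ), where Λ = λ₁+λ₂+λ₃. -/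
theorem stationary_distribution_three_heterogeneous_servers
    (lam1 lam2 lam3 : ℝ) (h1 : 0 < lam1) (h2 : 0 < lam2) (h3 : 0 < lam3)
    (L : ℝ) (hL : L = lam1 + lam2 + lam3)
    (p1 p2 p3 p4 p5 p6 : ℝ)
    (b1 : p1 * (lam2 + lam3) = lam1 * (p3 + p4))
    (b2 : p2 * (lam2 + lam3) = lam1 * (p5 + p6))
    (b3 : p3 * (lam1 + lam3) = lam2 * (p1 + p2))
    (b4 : p4 * (lam1 + lam3) = lam2 * (p5 + p6))
    (b5 : p5 * (lam1 + lam2) = lam3 * (p1 + p2))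
    (b6 : p6 * (lam1 + lam2) = lam3 * (p3 + p4))
    (hsum : p1 + p2 + p3 + p4 + p5 + p6 = 1) :
    p1 = lam1 * lam2 / ((lam2 + lam3) * L) ∧
    p2 = lam1 * lam3 / ((lam2 + lam3) * L) ∧
    p3 = lam2 * lam1 / ((lam1 + lam3) * L) ∧
    p4 = lam2 * lam3 / ((lam1 + lam3) * L) ∧
    p5 = lam3 * lam1 / ((lam1 + lam2) * L) ∧
    p6 = lam3 * lam2 / ((lam1 + lam2) * L) := by
  subst hL
  have hA : (p1+p2)*(lam1+lam2+lam3) = lam1 := by linear_combination b1 + b2 + lam1*hsum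
  have hB : (p3+p4)*(lam1+lam2+lam3) = lam2 := by linear_combination b3 + b4 + lam2*hsum
  have hC : (p5+p6)*(lam1+lam2+lam3) = lam3 := by linear_combination b5 + b6 + lam3*hsum
  have n12 : lam1 + lam2 ≠ 0 := by positivity
  have n13 : lam1 + lam3 ≠ 0 := by positivity
  have n23 : lam2 + lam3 ≠ 0 := by positivity
  have nL : lam1 + lam2 + lam3 ≠ 0 := by positivity
  refine ⟨?_, ?_, ?_, ?_, ?_, ?_⟩ <;> field_simp
  · linear_combination (lam1+lam2+lam3)*b1 + lam1*hB
  · linear_combination (lam1+lam2+lam3)*b2 + lam1*hC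
  · linear_combination (lam1+lam2+lam3)*b3 + lam2*hA
  · linear_combination (lam1+lam2+lam3)*b4 + lam2*hC
  · linear_combination (lam1+lam2+lam3)*b5 + lam3*hA
  · linear_combination (lam1+lam2+lam3)*b6 + lam3*hB
end

section
/- For the single-source n-server homogeneous LCFS network, the average AoI satisfies v₀ = v_n + (λ/(nμ))·w_n, where v_n = v₁ + ∑_{j=2}^n w_j, v₁ = 1/(nλ), and w_j = (1/(nλ))∏_{i=1}^{j-1}(λ(n-i+1))/(iμ+(n-i)λ); i.e., v₀ = ∑_{j=2}^n w_j + 1/(nλ) + (λ/(nμ))w_n. -/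
open Finset

theorem aoi_v0_identity
    (n : ℕ) (hn : 1 ≤ n) (lam mu : ℝ) (hlam : 0 < lam) (hmu : 0 < mu)
    (v w : ℕ → ℝ)
    (hw : ∀ j : ℕ, 2 ≤ j → j ≤ n →
      w j = (1 / (n * lam)) * ∏ i ∈ Icc 1 (j - 1),
        (lam * ((n : ℝ) - i + 1)) / ((i : ℝ) * mu + ((n : ℝ) - i) * lam))
    (hv1 : v 1 = 1 / (n * lam))
    (hvj : ∀ j : ℕ, 1 ≤ j → j ≤ n → v j = v 1 + ∑ k ∈ Icc 2 j, w k)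
    (hsum : mu * ∑ i ∈ Icc 1 n, v i = (lam + n * mu) * v n - 1 - lam * v (n - 1))
    (hv0 : v 0 = 1 / (n * mu) + (1 / n) * ∑ j ∈ Icc 1 n, v j) :
    v 0 = ∑ j ∈ Icc 2 n, w j + 1 / (n * lam) + (lam / (n * mu)) * w n := by
  rcases eq_or_lt_of_le hn with h1 | h2
  · -- n = 1 : hypotheses are contradictory
    subst h1
    simp only [Nat.cast_one, Icc_self, sum_singleton, Nat.sub_self] at hsum hv0
    exfalso
    have hv1' : v 1 = 1 / lam := by rw [hv1]; norm_num
    have h0 : lam * v 0 = 0 := by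
      have : lam * v 1 = 1 := by rw [hv1']; field_simp
      nlinarith [hsum]
    have hz : v 0 = 0 := by
      rcases mul_eq_zero.mp h0 with h | h
      · exact absurd h hlam.ne'
      · exact h
    rw [hz, hv1'] at hv0
    have h1 : (0:ℝ) < 1 / mu := by positivity
    have h2 : (0:ℝ) < 1 / lam := by positivity
    have h3 : (0:ℝ) < mu⁻¹ := inv_pos.mpr hmu
    have h4 : (0:ℝ) < lam⁻¹ := inv_pos.mpr hlam
    norm_num at hv0
    linarith
  · -- n ≥ 2
    have hn2 : 2 ≤ n := h2
    obtain ⟨m, rfl⟩ : ∃ m, n = m + 1 := ⟨n - 1, by omega⟩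
    have hvn := hvj (m + 1) (by omega) le_rfl
    have hvm := hvj m (by omega) (by omega)
    have hsplit : ∑ k ∈ Icc 2 (m + 1), w k = (∑ k ∈ Icc 2 m, w k) + w (m + 1) :=
      Finset.sum_Icc_succ_top (by omega) w
    have hwn : v (m + 1) - v m = w (m + 1) := by
      rw [hvn, hvm, hsplit]; ring
    have hn0 : ((m : ℝ) + 1) ≠ 0 := by positivity
    have hmu0 : mu ≠ 0 := hmu.ne'
    have h3 : ((m : ℝ) + 1) * mu * v 0 = 1 + mu * ∑ j ∈ Icc 1 (m + 1), v j := by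
      rw [hv0]; push_cast; field_simp
    have key : v 0 = v (m + 1) + (lam / (((m : ℕ) + 1 : ℕ) * mu)) * w (m + 1) := by
      have h4 : ((m : ℝ) + 1) * mu * v 0
          = ((m : ℝ) + 1) * mu * (v (m + 1) + (lam / (((m : ℕ) + 1 : ℕ) * mu)) * w (m + 1)) := by
        rw [h3]
        push_cast at hsum ⊢
        field_simp
        linear_combination hsum + lam * hwn
      exact mul_left_cancel₀ (by positivity) h4
    rw [key, hvn, hv1]
    push_cast
    ring
end
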